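/- Suppose L ≥ 0 and F admits an MMR expansion with data (Δ, (P^{(j)})_{j≥1}). Then for every j ≥ 1: the coefficient of x^r in P^{(j)} vanishes for all r < −2dj, and the coefficient of x^{−2dj} in P^{(j)} equals the binomial coefficient C(L,j). In particular, for 1 ≤ j ≤ L the minimal x-degree of P^{(j)} is exactly −2dj with leading coefficient C(L,j), while for j > L the minimal x-degree of P^{(j)} is strictly greater than −2dj. -/

import Mathlib

open HahnSeries PowerSeries

lemma ofPS_coeff_neg (x : PowerSeries ℚ) {n : ℤ} (hn : n < 0) :
    (ofPowerSeries ℤ ℚ x).coeff n = 0 := by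
  rw [ofPowerSeries_apply]
  apply embDomain_notin_range
  rintro ⟨m, hm⟩
  have hm' : (m : ℤ) = n := hm
  omega

lemma key_coeff (e : ℤ) (G : PowerSeries ℚ) (r : ℤ) :
    (HahnSeries.single e (1:ℚ) * HahnSeries.ofPowerSeries ℤ ℚ G).coeff r =
      if e ≤ r then PowerSeries.coeff (r - e).toNat G else 0 := by
  have h : r = (r - e) + e := by ring
  conv_lhs => rw [h]
  rw [HahnSeries.coeff_single_mul_add, one_mul]
  split_ifs with hle
  · have : (r - e) = ((r - e).toNat : ℤ) := by omega
    conv_lhs => rw [this]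
    rw [ofPowerSeries_apply_coeff]
  · exact ofPS_coeff_neg _ (by omega)

lemma coeff_one_add_X_pow (n j : ℕ) :
    PowerSeries.coeff (R := ℚ) j ((1 + PowerSeries.X) ^ n) = n.choose j := by
  rw [add_comm, add_pow, map_sum]
  have h : ∀ k ∈ Finset.range (n+1),
      PowerSeries.coeff j ((X:PowerSeries ℚ)^k * 1^(n-k) * (n.choose k : PowerSeries ℚ)) =
        if k = j then (n.choose k : ℚ) else 0 := by
    intro k _
    rw [one_pow, mul_one, ← map_natCast (PowerSeries.C (R := ℚ)), mul_comm, coeff_C_mul, coeff_X_pow]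
    split_ifs with h1 h2 h3
    · ring
    · exact absurd h1.symm h2
    · exact absurd h3.symm h1
    · ring
  rw [Finset.sum_congr rfl h, Finset.sum_ite_eq' (Finset.range (n+1)) j]
  split_ifs with hmem
  · rfl
  · rw [Finset.mem_range, not_lt] at hmem
    rw [Nat.choose_eq_zero_of_lt (by omega)]
    simp



/-- The unit `a + h` of the power series ring `K[[h]]`, for `a ≠ 0`. -/
noncomputable def substUnit (K : Type*) [Field K] (a : K) (ha : a ≠ 0) : (PowerSeries K)ˣ :=
  Units.mkOfMulEqOne (PowerSeries.C a + PowerSeries.X)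
    (PowerSeries.C a + PowerSeries.X)⁻¹
    (PowerSeries.mul_inv_cancel _ (by simp [ha]))

/-- Substitution of the unit `U` (e.g. `1 + h` or `ω + h`) for `q` in a Laurent
polynomial `f ∈ ℤ[q,q⁻¹]`, represented by its finitely supported coefficient function
`f : ℤ →₀ ℤ`; the result `f(U) = ∑_a f_a · U^a` lies in `K[[h]]`. -/
noncomputable def lsubst {K : Type*} [Field K] (U : (PowerSeries K)ˣ) (f : ℤ →₀ ℤ) :
    PowerSeries K :=
  ∑ a ∈ f.support, ((f a : ℤ) : PowerSeries K) * ((U ^ a : (PowerSeries K)ˣ) : PowerSeries K)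

/-- The formal Laurent series `∑_{n ≥ d} c_n xⁿ ∈ K((x))`. -/
noncomputable def seriesOf {K : Type*} [Field K] (d : ℤ) (c : ℤ → K) : LaurentSeries K :=
  HahnSeries.single d 1 * HahnSeries.ofPowerSeries ℤ K (PowerSeries.mk fun i => c (d + i))

/-- A Laurent polynomial over `K`, represented by its finitely supported coefficient
function `g : ℤ →₀ K`, viewed inside the field of formal Laurent series `K((x))`. -/
noncomputable def finsuppToLS {K : Type*} [Zero K] (g : ℤ →₀ K) : LaurentSeries K :=
  { coeff := ⇑g, isPWO_support' := g.finite_support.isPWO }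

/-- A Laurent polynomial with integer coefficients, viewed inside `ℚ((x))`. -/
noncomputable def intLaurentToLS (g : ℤ →₀ ℤ) : LaurentSeries ℚ :=
  finsuppToLS (g.mapRange (fun a : ℤ => (a : ℚ)) (by simp))

/-- `F` (given by its Laurent-polynomial coefficients `f n ∈ ℤ[q,q⁻¹]`, supported in
degrees `n ≥ d`) admits an MMR expansion with data `(Δ, P)`: for every `j ≥ 0`, the
Laurent series `∑_{n ≥ d} ([h^j] f_n(1+h)) xⁿ` equals `P^{(j)}(x)/Δ(x)^{2j+1}` in
`ℚ((x))`, where `P⁰ = 1`. -/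
def HasMMRExpansion (d : ℤ) (f : ℤ → (ℤ →₀ ℤ)) (Δ : ℤ →₀ ℤ) (P : ℕ → (ℤ →₀ ℚ)) : Prop :=
  Δ ≠ 0 ∧ P 0 = Finsupp.single 0 1 ∧
  ∀ j : ℕ,
    seriesOf d (fun r =>
        PowerSeries.coeff j (lsubst (substUnit ℚ 1 one_ne_zero) (f r))) =
      finsuppToLS (P j) / (intLaurentToLS Δ) ^ (2 * j + 1)

lemma lsubst_single (L : ℤ) (hL : 0 ≤ L) :
    lsubst (substUnit ℚ 1 one_ne_zero) (Finsupp.single L 1) = (1 + PowerSeries.X) ^ L.toNat := by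
  unfold lsubst
  rw [Finsupp.support_single_ne_zero _ one_ne_zero, Finset.sum_singleton, Finsupp.single_eq_same,
    Int.cast_one, one_mul]
  have h1 : substUnit ℚ 1 one_ne_zero ^ L = substUnit ℚ 1 one_ne_zero ^ (L.toNat) := by
    rw [← zpow_natCast, Int.toNat_of_nonneg hL]
  rw [h1, Units.val_pow_eq_pow_val]
  have h2 : ((substUnit ℚ 1 one_ne_zero : (PowerSeries ℚ)ˣ) : PowerSeries ℚ)
      = 1 + PowerSeries.X := by
    show PowerSeries.C (1:ℚ) + PowerSeries.X = 1 + PowerSeries.X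
    rw [map_one]
  rw [h2]

/-- If `L ≥ 0` and `F` admits an MMR expansion with data `(Δ, P)`,
then for every `j ≥ 1` the coefficient of `x^r` in `P⁽ʲ⁾` vanishes for `r < -2dj` and
the coefficient of `x^{-2dj}` equals the binomial coefficient `C(L, j)`. -/
theorem mmr_deg_Pj_nonneg_L (d L : ℤ) (hL : 0 ≤ L) (f : ℤ → (ℤ →₀ ℤ))
    (hfsupp : ∀ r : ℤ, r < d → f r = 0) (hfd : f d = Finsupp.single L 1)
    (Δ : ℤ →₀ ℤ) (P : ℕ → (ℤ →₀ ℚ)) (hmmr : HasMMRExpansion d f Δ P) :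
    ∀ j : ℕ, 1 ≤ j →
      (∀ r : ℤ, r < -(2 * d * j) → P j r = 0) ∧
      P j (-(2 * d * j)) = (L.toNat.choose j : ℚ) := by
  obtain ⟨hΔ, hP0, hexp⟩ := hmmr
  have hΔne : intLaurentToLS Δ ≠ 0 := by
    intro h
    apply hΔ
    ext a
    have h2 : ((Δ a : ℤ) : ℚ) = 0 := congrArg (fun x => HahnSeries.coeff x a) h
    exact_mod_cast h2
  have hP0LS : finsuppToLS (P 0) = 1 := by
    ext a
    show (P 0) a = (1 : LaurentSeries ℚ).coeff a
    rw [hP0, ← HahnSeries.single_zero_one, HahnSeries.coeff_single, Finsupp.single_apply]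
    split_ifs with h1 h2 h3
    · rfl
    · omega
    · omega
    · rfl
  -- the power series pieces
  set U := substUnit ℚ 1 one_ne_zero with hU
  have hg : ∀ i : ℕ, seriesOf d (fun r => PowerSeries.coeff i (lsubst U (f r))) =
      HahnSeries.single d 1 * HahnSeries.ofPowerSeries ℤ ℚ
        (PowerSeries.mk fun m => PowerSeries.coeff i (lsubst U (f (d + m)))) := fun i => rfl
  have hgcc : ∀ i : ℕ, PowerSeries.constantCoeff
      (PowerSeries.mk fun m => PowerSeries.coeff i (lsubst U (f (d + m)))) =
        (L.toNat.choose i : ℚ) := by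
    intro i
    rw [← PowerSeries.coeff_zero_eq_constantCoeff, PowerSeries.coeff_mk, Nat.cast_zero, add_zero, hfd,
      lsubst_single L hL, coeff_one_add_X_pow]
  set g0 : PowerSeries ℚ :=
    PowerSeries.mk fun m => PowerSeries.coeff 0 (lsubst U (f (d + m))) with hg0
  have hS0 : seriesOf d (fun r => PowerSeries.coeff 0 (lsubst U (f r))) =
      1 / intLaurentToLS Δ := by
    have := hexp 0
    rw [hP0LS] at this
    simpa using this
  have hunit : intLaurentToLS Δ *
      seriesOf d (fun r => PowerSeries.coeff 0 (lsubst U (f r))) = 1 := by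
    rw [hS0]
    field_simp
  have hΔinv : intLaurentToLS Δ =
      (seriesOf d (fun r => PowerSeries.coeff 0 (lsubst U (f r))))⁻¹ :=
    eq_inv_of_mul_eq_one_left hunit
  intro j hj
  set n : ℕ := 2 * j + 1 with hn
  set gj : PowerSeries ℚ :=
    PowerSeries.mk fun m => PowerSeries.coeff j (lsubst U (f (d + m))) with hgj
  have hGcc : PowerSeries.constantCoeff (g0 ^ n) = 1 := by
    rw [map_pow, hgcc 0, Nat.choose_zero_right, Nat.cast_one, one_pow]
  have hGne : PowerSeries.constantCoeff (g0 ^ n) ≠ 0 := by rw [hGcc]; exact one_ne_zero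
  have hS0n : seriesOf d (fun r => PowerSeries.coeff 0 (lsubst U (f r))) ^ n =
      HahnSeries.single ((n : ℤ) * d) 1 * HahnSeries.ofPowerSeries ℤ ℚ (g0 ^ n) := by
    rw [hg 0]
    rw [mul_pow, HahnSeries.single_pow, one_pow, map_pow, nsmul_eq_mul]
  have hinv1 : seriesOf d (fun r => PowerSeries.coeff 0 (lsubst U (f r))) ^ n *
      (HahnSeries.single (-((n : ℤ) * d)) 1 *
        HahnSeries.ofPowerSeries ℤ ℚ ((g0 ^ n)⁻¹)) = 1 := by
    rw [hS0n, mul_mul_mul_comm, HahnSeries.single_mul_single, ← map_mul,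
      PowerSeries.mul_inv_cancel _ hGne, add_neg_cancel]
    simp [HahnSeries.single_zero_one]
  have hpow_inv : (seriesOf d (fun r => PowerSeries.coeff 0 (lsubst U (f r))) ^ n)⁻¹ =
      HahnSeries.single (-((n : ℤ) * d)) 1 * HahnSeries.ofPowerSeries ℤ ℚ ((g0 ^ n)⁻¹) :=
    inv_eq_of_mul_eq_one_right hinv1
  have hPj : finsuppToLS (P j) =
      seriesOf d (fun r => PowerSeries.coeff j (lsubst U (f r))) *
        (intLaurentToLS Δ) ^ n := by
    rw [hexp j]
    field_simp
    rfl
  have hPj2 : finsuppToLS (P j) = HahnSeries.single (-(2 * d * (j : ℤ))) 1 *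
      HahnSeries.ofPowerSeries ℤ ℚ (gj * (g0 ^ n)⁻¹) := by
    rw [hPj, hΔinv, inv_pow, hpow_inv, hg j, mul_mul_mul_comm, HahnSeries.single_mul_single,
      mul_one, ← map_mul]
    congr 2
    push_cast [hn]
    ring
  have hccinv : PowerSeries.constantCoeff ((g0 ^ n)⁻¹) = 1 := by
    have h1 := congrArg (PowerSeries.constantCoeff) (PowerSeries.mul_inv_cancel _ hGne)
    rw [map_mul, hGcc, one_mul, map_one] at h1
    exact h1
  constructor
  · intro r hr
    have := congrArg (fun x => HahnSeries.coeff x r) hPj2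
    rw [key_coeff] at this
    rw [if_neg (by omega)] at this
    exact this
  · have := congrArg (fun x => HahnSeries.coeff x (-(2 * d * (j : ℤ)))) hPj2
    rw [key_coeff, if_pos le_rfl, sub_self, Int.toNat_zero,
      PowerSeries.coeff_zero_eq_constantCoeff, map_mul, hgcc j, hccinv, mul_one] at this
    exact this
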